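/- arXiv:1204.1991 — 4 statements merged into one kernel-verified Lean document; each statement's English description precedes it below -/
import Mathlib

section
/- Let φ : ℝ^n → ℝ be a convex function, Γ ⊆ ℤ^n a subgroup, and suppose φ(m + γ) = φ(m) + α_γ(m) for all γ ∈ Γ, with α_γ affine-linear with integral slope dα_γ ∈ Hom(ℤ^n, ℤ) and constant term c_γ ∈ ℤ. Define the cone C(Δ_φ) = { (x, r, ℓ) ∈ ℝ^n × ℝ × ℝ : ℓ > 0, r ≥ ℓ·φ(x/ℓ) } ∪ ({0} × ℝ_{≥0} × {0}). Then for each γ ∈ Γ the linear map ψ_γ(x, r, ℓ) = (x + ℓγ, ⟨dα_γ, x⟩ + ℓ c_γ + r, ℓ) maps C(Δ_φ) bijectively onto itself. -/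
open Finset

/-- The cone over the graph-polyhedron `Δ_φ = {(m,r) : r ≥ φ(m)}`:
`C(Δ_φ) = {(x,r,ℓ) : ℓ > 0, r ≥ ℓφ(x/ℓ)} ∪ ({0} × ℝ_{≥0} × {0})`. -/
def coneOverGraph {n : ℕ} (φ : (Fin n → ℝ) → ℝ) : Set ((Fin n → ℝ) × ℝ × ℝ) :=
  {p | 0 < p.2.2 ∧ p.2.2 * φ (p.2.2⁻¹ • p.1) ≤ p.2.1} ∪
  {p | p.1 = 0 ∧ 0 ≤ p.2.1 ∧ p.2.2 = 0}

lemma aux_mapsTo {n : ℕ} (φ : (Fin n → ℝ) → ℝ) (D : Fin n → ℝ) (C : ℝ) (g : Fin n → ℝ)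
    (hper : ∀ x : Fin n → ℝ, φ (x + g) = φ x + (∑ i, D i * x i) + C) :
    Set.MapsTo
      (fun p : (Fin n → ℝ) × ℝ × ℝ =>
        (p.1 + p.2.2 • g, (∑ i, D i * p.1 i) + p.2.2 * C + p.2.1, p.2.2))
      (coneOverGraph φ) (coneOverGraph φ) := by
  rintro ⟨x, r, ℓ⟩ (⟨hℓ, hr⟩ | ⟨hx, hr, hℓ⟩)
  · left
    refine ⟨hℓ, ?_⟩
    have hℓ0 : ℓ ≠ 0 := ne_of_gt hℓ
    have h1 : ℓ⁻¹ • (x + ℓ • g) = ℓ⁻¹ • x + g := by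
      rw [smul_add, smul_smul, inv_mul_cancel₀ hℓ0, one_smul]
    simp only [h1, hper (ℓ⁻¹ • x)]
    have h2 : ℓ * ∑ i, D i * (ℓ⁻¹ • x) i = ∑ i, D i * x i := by
      rw [Finset.mul_sum]
      refine Finset.sum_congr rfl fun i _ => ?_
      simp only [Pi.smul_apply, smul_eq_mul]
      field_simp
    have := hr
    simp only [Set.mem_setOf_eq] at this ⊢
    nlinarith [this, h2]
  · right
    subst hx hℓ
    refine ⟨?_, ?_, rfl⟩
    · funext i; simp
    · simp only [Pi.zero_apply, mul_zero, Finset.sum_const_zero, zero_mul, zero_add]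
      linarith

theorem stmt1 {n : ℕ} (Γ : AddSubgroup (Fin n → ℤ)) (φ : (Fin n → ℝ) → ℝ)
    (hconv : ConvexOn ℝ Set.univ φ)
    (d : (Fin n → ℤ) → (Fin n → ℤ)) (c : (Fin n → ℤ) → ℤ)
    (hper : ∀ γ ∈ Γ, ∀ x : Fin n → ℝ,
      φ (x + fun i => (γ i : ℝ)) = φ x + (∑ i, (d γ i : ℝ) * x i) + (c γ : ℝ))
    (γ : Fin n → ℤ) (hγ : γ ∈ Γ) :
    Set.BijOn
      (fun p : (Fin n → ℝ) × ℝ × ℝ =>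
        ((p.1 + p.2.2 • fun i => (γ i : ℝ)),
          (∑ i, (d γ i : ℝ) * p.1 i) + p.2.2 * (c γ : ℝ) + p.2.1, p.2.2))
      (coneOverGraph φ) (coneOverGraph φ) := by
  set gR : Fin n → ℝ := fun i => (γ i : ℝ) with hgR
  have hγ' : -γ ∈ Γ := neg_mem hγ
  have hng : (fun i => ((-γ : Fin n → ℤ) i : ℝ)) = -gR := by
    funext i; simp [hgR]
  have hper1 : ∀ x : Fin n → ℝ,
      φ (x + gR) = φ x + (∑ i, (d γ i : ℝ) * x i) + (c γ : ℝ) := hper γ hγ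
  have hper2 : ∀ x : Fin n → ℝ,
      φ (x + -gR) = φ x + (∑ i, (d (-γ) i : ℝ) * x i) + (c (-γ) : ℝ) := by
    intro x
    have := hper (-γ) hγ' x
    rwa [hng] at this
  -- key identities relating d γ, c γ with d (-γ), c (-γ)
  have H : ∀ x : Fin n → ℝ,
      (∑ i, (((d γ i : ℝ)) * x i) + ∑ i, ((d (-γ) i : ℝ)) * x i)
        + ((∑ i, (d (-γ) i : ℝ) * gR i) + (c γ : ℝ) + (c (-γ) : ℝ)) = 0 := by
    intro x
    have h1 := hper1 x
    have h2 := hper2 (x + gR)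
    have hx : (x + gR) + -gR = x := by abel
    rw [hx, h1] at h2
    have hsum : ∑ i, (d (-γ) i : ℝ) * (x + gR) i
        = ∑ i, (d (-γ) i : ℝ) * x i + ∑ i, (d (-γ) i : ℝ) * gR i := by
      rw [← Finset.sum_add_distrib]
      exact Finset.sum_congr rfl fun i _ => by simp [mul_add]
    rw [hsum] at h2
    linarith
  have hB : (∑ i, (d (-γ) i : ℝ) * gR i) + (c γ : ℝ) + (c (-γ) : ℝ) = 0 := by
    have := H 0
    simpa using this
  have hA : ∀ j, (d γ j : ℝ) + (d (-γ) j : ℝ) = 0 := by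
    intro j
    have := H (Pi.single j 1)
    rw [hB, add_zero] at this
    simpa [Pi.single_apply, mul_ite, Finset.sum_ite_eq'] using this
  -- the inverse map
  set f := (fun p : (Fin n → ℝ) × ℝ × ℝ =>
        ((p.1 + p.2.2 • fun i => (γ i : ℝ)),
          (∑ i, (d γ i : ℝ) * p.1 i) + p.2.2 * (c γ : ℝ) + p.2.1, p.2.2)) with hf
  set g := (fun p : (Fin n → ℝ) × ℝ × ℝ =>
        (p.1 + p.2.2 • (-gR),
          (∑ i, (d (-γ) i : ℝ) * p.1 i) + p.2.2 * (c (-γ) : ℝ) + p.2.1, p.2.2)) with hg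
  have key : ∀ (D1 D2 : Fin n → ℝ) (C1 C2 : ℝ) (x : Fin n → ℝ) (ℓ : ℝ) (u : Fin n → ℝ),
      (∀ j, D1 j + D2 j = 0) → ((∑ i, D2 i * u i) + C1 + C2 = 0) →
      (∑ i, D2 i * (x + ℓ • u) i) + ℓ * C2 + ((∑ i, D1 i * x i) + ℓ * C1) = 0 := by
    intro D1 D2 C1 C2 x ℓ u h1 h2
    have e1 : ∑ i, D2 i * (x + ℓ • u) i
        = ∑ i, D2 i * x i + ℓ * ∑ i, D2 i * u i := by
      rw [Finset.mul_sum, ← Finset.sum_add_distrib]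
      exact Finset.sum_congr rfl fun i _ => by
        simp [mul_add]; ring
    have e2 : ∑ i, D2 i * x i = -∑ i, D1 i * x i := by
      rw [← Finset.sum_neg_distrib]
      refine Finset.sum_congr rfl fun i _ => ?_
      have h' : D2 i = -D1 i := by linarith [h1 i]
      rw [h']; ring
    rw [e1, e2]
    linear_combination ℓ * h2
  have hgf : ∀ p, g (f p) = p := by
    rintro ⟨x, r, ℓ⟩
    simp only [hf, hg]
    refine Prod.ext ?_ (Prod.ext ?_ rfl)
    · show (x + ℓ • gR) + ℓ • (-gR) = x
      module
    · show (∑ i, (d (-γ) i : ℝ) * (x + ℓ • gR) i) + ℓ * (c (-γ) : ℝ)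
          + ((∑ i, (d γ i : ℝ) * x i) + ℓ * (c γ : ℝ) + r) = r
      have := key (fun i => (d γ i : ℝ)) (fun i => (d (-γ) i : ℝ))
        (c γ : ℝ) (c (-γ) : ℝ) x ℓ gR hA (by linarith [hB])
      linarith
  have hfg : ∀ p, f (g p) = p := by
    rintro ⟨x, r, ℓ⟩
    simp only [hf, hg]
    refine Prod.ext ?_ (Prod.ext ?_ rfl)
    · show (x + ℓ • (-gR)) + ℓ • gR = x
      module
    · show (∑ i, (d γ i : ℝ) * (x + ℓ • (-gR)) i) + ℓ * (c γ : ℝ)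
          + ((∑ i, (d (-γ) i : ℝ) * x i) + ℓ * (c (-γ) : ℝ) + r) = r
      have hA' : ∀ j, (d (-γ) j : ℝ) + (d γ j : ℝ) = 0 := fun j => by linarith [hA j]
      have hB' : (∑ i, (d γ i : ℝ) * (-gR) i) + (c (-γ) : ℝ) + (c γ : ℝ) = 0 := by
        have e : ∑ i, (d γ i : ℝ) * (-gR) i = -∑ i, (d (-γ) i : ℝ) * (-gR) i := by
          rw [← Finset.sum_neg_distrib]
          refine Finset.sum_congr rfl fun i _ => ?_
          have h' : (d γ i : ℝ) = -(d (-γ) i : ℝ) := by linarith [hA i]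
          rw [h']; ring
        have e2 : ∑ i, (d (-γ) i : ℝ) * (-gR) i = -∑ i, (d (-γ) i : ℝ) * gR i := by
          rw [← Finset.sum_neg_distrib]
          exact Finset.sum_congr rfl fun i _ => by simp [mul_neg]
        rw [e, e2]; linarith [hB]
      have := key (fun i => (d (-γ) i : ℝ)) (fun i => (d γ i : ℝ))
        (c (-γ) : ℝ) (c γ : ℝ) x ℓ (-gR) hA' hB'
      linarith
  have hm1 : Set.MapsTo f (coneOverGraph φ) (coneOverGraph φ) :=
    aux_mapsTo φ (fun i => (d γ i : ℝ)) (c γ : ℝ) gR hper1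
  have hm2 : Set.MapsTo g (coneOverGraph φ) (coneOverGraph φ) :=
    aux_mapsTo φ (fun i => (d (-γ) i : ℝ)) (c (-γ) : ℝ) (-gR) hper2
  exact Set.InvOn.bijOn ⟨fun p _ => hgf p, fun p _ => hfg p⟩ hm1 hm2
end

section
/- Let φ : ℝ → ℝ be a convex function and suppose there exist d > 0, a > 0 and b ∈ ℝ with φ(x + d) = φ(x) + a·x + b for all x ∈ ℝ. Then for every affine function L(x) = p·x + q, one has φ(x) − L(x) → ∞ as |x| → ∞. -/
theorem stmt5 (φ : ℝ → ℝ) (hconv : ConvexOn ℝ Set.univ φ)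
    (d a b : ℝ) (hd : 0 < d) (ha : 0 < a)
    (hper : ∀ x : ℝ, φ (x + d) = φ x + a * x + b) :
    ∀ p q : ℝ,
      Filter.Tendsto (fun x => φ x - (p * x + q)) (Filter.cocompact ℝ) Filter.atTop := by
  intro p q
  rw [cocompact_eq_atBot_atTop, Filter.tendsto_sup]
  constructor
  · -- at atBot
    set x₁ : ℝ := min 0 ((d * (p - 1) - b) / a) with hx1
    have hx1' : a * x₁ ≤ d * (p - 1) - b := by
      calc a * x₁ ≤ a * ((d * (p - 1) - b) / a) :=
            mul_le_mul_of_nonneg_left (min_le_right _ _) ha.le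
        _ = d * (p - 1) - b := by field_simp
    have hs : (φ (x₁ + d) - φ x₁) / d ≤ p - 1 := by
      rw [hper x₁, div_le_iff₀ hd]
      nlinarith
    apply Filter.tendsto_atTop_mono' _ _
      (Filter.tendsto_atTop_add_const_right _ (φ x₁ - (p - 1) * x₁ - q)
        Filter.tendsto_neg_atBot_atTop)
    filter_upwards [Filter.eventually_lt_atBot x₁] with x hx
    have hslope := hconv.slope_mono_adjacent (Set.mem_univ x) (Set.mem_univ (x₁ + d))
      hx (by linarith)
    have h1 : φ x₁ - φ x ≤ (φ (x₁ + d) - φ x₁) / d * (x₁ - x) := by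
      rw [← div_le_iff₀ (by linarith : (0:ℝ) < x₁ - x)]
      have : x₁ + d - x₁ = d := by ring
      rw [this] at hslope
      exact hslope
    have hxp : 0 < x₁ - x := by linarith
    show -x + (φ x₁ - (p - 1) * x₁ - q) ≤ φ x - (p * x + q)
    nlinarith [mul_le_mul_of_nonneg_right hs hxp.le]
  · -- at atTop
    set x₀ : ℝ := max 0 ((d * (p + 1) - b) / a) with hx0
    have hx0' : d * (p + 1) - b ≤ a * x₀ := by
      calc d * (p + 1) - b = a * ((d * (p + 1) - b) / a) := by field_simp
        _ ≤ a * x₀ := mul_le_mul_of_nonneg_left (le_max_right _ _) ha.le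
    have hs : p + 1 ≤ (φ (x₀ + d) - φ x₀) / d := by
      rw [hper x₀, le_div_iff₀ hd]
      nlinarith
    apply Filter.tendsto_atTop_mono' _ _
      (Filter.tendsto_atTop_add_const_right _ (φ (x₀ + d) - (p + 1) * (x₀ + d) - q)
        Filter.tendsto_id)
    filter_upwards [Filter.eventually_gt_atTop (x₀ + d)] with x hx
    have hslope := hconv.slope_mono_adjacent (Set.mem_univ x₀) (Set.mem_univ x)
      (by linarith) hx
    have hxp : 0 < x - (x₀ + d) := by linarith
    have h1 : (φ (x₀ + d) - φ x₀) / d * (x - (x₀ + d)) ≤ φ x - φ (x₀ + d) := by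
      rw [← le_div_iff₀ hxp]
      have : x₀ + d - x₀ = d := by ring
      rw [this] at hslope
      exact hslope
    simp only [id_eq]
    nlinarith [mul_le_mul_of_nonneg_right hs hxp.le]
end

section
/- Work in the ring ℂ[[x, y]] of formal power series (all maps below are continuous ℂ-algebra automorphisms determined by their values on x and y; products like x(1+y)^{-1} and x(1+xy)^{-1} make sense since 1+y and 1+xy are units). Define automorphisms: θ₁ by θ₁(x) = x, θ₁(y) = y(1+x); θ₂ by θ₂(x) = x(1+y)^{-1}, θ₂(y) = y; θ₃ by θ₃(x) = x(1+xy)^{-1}, θ₃(y) = y(1+xy). Then θ₁ ∘ θ₂ = θ₂ ∘ θ₃ ∘ θ₁ as automorphisms of ℂ[[x,y]]. -/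
open MvPowerSeries

/-- Substitution `x ↦ a`, `y ↦ b` on `ℂ[[x,y]]`, defined coefficientwise.  For `a`, `b`
with vanishing constant term this is the continuous ℂ-algebra endomorphism of
`ℂ[[x,y]]` determined by sending `x` to `a` and `y` to `b`: the coefficient of a
monomial `e` in `f(a,b)` only involves the (finitely many) coefficients of `f` in
total degree `≤ |e|`. -/
noncomputable def substXY (a b : MvPowerSeries (Fin 2) ℂ) :
    MvPowerSeries (Fin 2) ℂ → MvPowerSeries (Fin 2) ℂ :=
  fun f => fun e =>
    ∑ p ∈ Finset.range (e 0 + e 1 + 1) ×ˢ Finset.range (e 0 + e 1 + 1),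
      MvPowerSeries.coeff (Finsupp.single 0 p.1 + Finsupp.single 1 p.2) f *
        MvPowerSeries.coeff e (a ^ p.1 * b ^ p.2)

noncomputable abbrev Xv : MvPowerSeries (Fin 2) ℂ := MvPowerSeries.X 0
noncomputable abbrev Yv : MvPowerSeries (Fin 2) ℂ := MvPowerSeries.X 1

/-- `θ₁ : x ↦ x, y ↦ y(1+x)`. -/
noncomputable def theta1 : MvPowerSeries (Fin 2) ℂ → MvPowerSeries (Fin 2) ℂ :=
  substXY Xv (Yv * (1 + Xv))

/-- `θ₂ : x ↦ x(1+y)⁻¹, y ↦ y`. -/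
noncomputable def theta2 : MvPowerSeries (Fin 2) ℂ → MvPowerSeries (Fin 2) ℂ :=
  substXY (Xv * (1 + Yv)⁻¹) Yv

/-- `θ₃ : x ↦ x(1+xy)⁻¹, y ↦ y(1+xy)`. -/
noncomputable def theta3 : MvPowerSeries (Fin 2) ℂ → MvPowerSeries (Fin 2) ℂ :=
  substXY (Xv * (1 + Xv * Yv)⁻¹) (Yv * (1 + Xv * Yv))

section PentagonAux
open Finset
local notation "M" => MvPowerSeries (Fin 2) ℂ

def wt (e : Fin 2 →₀ ℕ) : ℕ := e 0 + e 1

noncomputable def sp (p : ℕ × ℕ) : Fin 2 →₀ ℕ := Finsupp.single 0 p.1 + Finsupp.single 1 p.2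

@[simp] lemma sp_apply0 (p : ℕ × ℕ) : sp p 0 = p.1 := by simp [sp]
@[simp] lemma sp_apply1 (p : ℕ × ℕ) : sp p 1 = p.2 := by simp [sp, Finsupp.single_apply]

lemma eq_sp (e : Fin 2 →₀ ℕ) : e = sp (e 0, e 1) := by
  ext i; fin_cases i <;> simp

@[simp] lemma wt_sp (p : ℕ × ℕ) : wt (sp p) = p.1 + p.2 := by simp [wt]

lemma wt_add (u v : Fin 2 →₀ ℕ) : wt (u + v) = wt u + wt v := by
  simp [wt]; ring

lemma wt_eq_zero {e : Fin 2 →₀ ℕ} (h : wt e = 0) : e = 0 := by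
  have h0 : e 0 = 0 := by simp [wt] at h; omega
  have h1 : e 1 = 0 := by simp [wt] at h; omega
  ext i; fin_cases i <;> simp [h0, h1]

/-- `f` has order at least `n`. -/
def LO (f : M) (n : ℕ) : Prop := ∀ e, wt e < n → MvPowerSeries.coeff e f = 0

lemma LO.zero (f : M) : LO f 0 := fun _ h => absurd h (Nat.not_lt_zero _)

lemma LO.mul {f g : M} {n m : ℕ} (hf : LO f n) (hg : LO g m) : LO (f * g) (n + m) := by
  intro e he
  rw [MvPowerSeries.coeff_mul]
  apply Finset.sum_eq_zero
  intro p hp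
  rw [Finset.HasAntidiagonal.mem_antidiagonal] at hp
  have hw : wt p.1 + wt p.2 = wt e := by rw [← wt_add, hp]
  by_cases h : wt p.1 < n
  · rw [hf _ h, zero_mul]
  · rw [hg _ (by omega), mul_zero]

lemma LO.one_of {f : M} (h : MvPowerSeries.constantCoeff f = 0) : LO f 1 := by
  intro e he
  have : e = 0 := wt_eq_zero (by omega)
  subst this
  simpa [MvPowerSeries.coeff_zero_eq_constantCoeff] using h

lemma LO.pow {f : M} (hf : LO f 1) (n : ℕ) : LO (f ^ n) n := by
  induction n with
  | zero => exact LO.zero _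
  | succ k ih => rw [pow_succ]; exact ih.mul hf

lemma LO.pow_mul_pow {a b : M} (ha : LO a 1) (hb : LO b 1) (p q : ℕ) :
    LO (a ^ p * b ^ q) (p + q) := (ha.pow p).mul (hb.pow q)

/-- The truncated evaluation. -/
noncomputable def Sv (a b : M) (N : ℕ) (f : M) : M :=
  ∑ p ∈ Finset.range N ×ˢ Finset.range N,
    MvPowerSeries.C (MvPowerSeries.coeff (sp p) f) * (a ^ p.1 * b ^ p.2)

lemma coeff_Sv (a b : M) (N : ℕ) (f : M) (e : Fin 2 →₀ ℕ) :
    MvPowerSeries.coeff e (Sv a b N f) =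
      ∑ p ∈ Finset.range N ×ˢ Finset.range N,
        MvPowerSeries.coeff (sp p) f * MvPowerSeries.coeff e (a ^ p.1 * b ^ p.2) := by
  rw [Sv, map_sum]
  exact Finset.sum_congr rfl fun p _ => by rw [MvPowerSeries.coeff_C_mul]

lemma coeff_substXY {a b : M} (ha : LO a 1) (hb : LO b 1) (f : M) {e : Fin 2 →₀ ℕ}
    {N : ℕ} (hN : wt e < N) :
    substXY a b f e = MvPowerSeries.coeff e (Sv a b N f) := by
  rw [coeff_Sv, substXY]
  show ∑ p ∈ Finset.range (wt e + 1) ×ˢ Finset.range (wt e + 1),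
      MvPowerSeries.coeff (sp p) f * MvPowerSeries.coeff e (a ^ p.1 * b ^ p.2) = _
  apply Finset.sum_subset
  · apply Finset.product_subset_product <;> exact Finset.range_subset_range.2 (by omega)
  · intro p hp hps
    simp only [Finset.mem_product, Finset.mem_range] at hp hps
    have : wt e < p.1 + p.2 := by omega
    rw [LO.pow_mul_pow ha hb p.1 p.2 e this, mul_zero]
lemma substXY_apply (a b f : M) (e : Fin 2 →₀ ℕ) :
    substXY a b f e =
      ∑ p ∈ Finset.range (e 0 + e 1 + 1) ×ˢ Finset.range (e 0 + e 1 + 1),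
        MvPowerSeries.coeff (sp p) f * MvPowerSeries.coeff e (a ^ p.1 * b ^ p.2) := rfl

lemma substXY_add (a b : M) (f g : M) :
    substXY a b (f + g) = substXY a b f + substXY a b g := by
  funext e
  have h : (substXY a b f + substXY a b g) e = substXY a b f e + substXY a b g e := rfl
  rw [h, substXY_apply, substXY_apply, substXY_apply, ← Finset.sum_add_distrib]
  exact Finset.sum_congr rfl fun p _ => by rw [map_add, add_mul]

lemma substXY_C (a b : M) (c : ℂ) :
    substXY a b (MvPowerSeries.C c) = MvPowerSeries.C c := by
  funext e
  rw [substXY_apply, show ((MvPowerSeries.C) c) e = MvPowerSeries.coeff e ((MvPowerSeries.C) c) from rfl, Finset.sum_eq_single ((0 : ℕ), (0 : ℕ))]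
  · have hsp : sp ((0 : ℕ), (0 : ℕ)) = 0 := by ext i; fin_cases i <;> simp
    rw [hsp, pow_zero, pow_zero, one_mul]
    simp [MvPowerSeries.coeff_C, MvPowerSeries.coeff_one]
  · intro p hp hne
    have hne0 : sp p ≠ 0 := by
      intro h
      apply hne
      have h0 : p.1 = 0 := by have := Finsupp.ext_iff.mp h 0; simpa using this
      have h1 : p.2 = 0 := by have := Finsupp.ext_iff.mp h 1; simpa using this
      exact Prod.ext h0 h1
    rw [MvPowerSeries.coeff_C, if_neg hne0, zero_mul]
  · intro h
    exact absurd (by simp [Finset.mem_product]) h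

lemma substXY_one (a b : M) : substXY a b 1 = 1 := by
  simpa using substXY_C a b 1

lemma substXY_X0 (a b : M) (ha : LO a 1) : substXY a b (MvPowerSeries.X 0) = a := by
  funext e
  rw [substXY_apply, show a e = MvPowerSeries.coeff e a from rfl]
  have key : ∀ p : ℕ × ℕ, p ≠ (1, 0) →
      MvPowerSeries.coeff (sp p) (MvPowerSeries.X (0 : Fin 2) : M) = 0 := by
    intro p hne
    rw [MvPowerSeries.coeff_X, if_neg]
    intro hq
    apply hne
    have h0 := Finsupp.ext_iff.mp hq 0
    have h1 := Finsupp.ext_iff.mp hq 1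
    rw [sp_apply0] at h0; rw [sp_apply1] at h1
    simp [Finsupp.single_apply] at h0 h1
    exact Prod.ext h0 h1
  by_cases h : 1 ≤ e 0 + e 1
  · rw [Finset.sum_eq_single ((1 : ℕ), (0 : ℕ))]
    · have hsp : sp ((1 : ℕ), (0 : ℕ)) = Finsupp.single 0 1 := by
        ext i; fin_cases i <;> simp [Finsupp.single_apply]
      rw [hsp, MvPowerSeries.coeff_index_single_self_X, one_mul, pow_one, pow_zero, mul_one]
    · intro p hp hne
      rw [key p hne, zero_mul]
    · intro hmem
      exact absurd (by simp [Finset.mem_product]; omega) hmem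
  · have he : e = 0 := wt_eq_zero (by simp [wt]; omega)
    subst he
    rw [ha 0 (by simp [wt]), Finset.sum_eq_zero]
    intro p hp
    simp only [Finset.mem_product, Finset.mem_range] at hp
    have : p = (0, 0) := by
      apply Prod.ext <;> simp <;> omega
    rw [key p (by rw [this]; decide), zero_mul]

lemma substXY_X1 (a b : M) (hb : LO b 1) : substXY a b (MvPowerSeries.X 1) = b := by
  funext e
  rw [substXY_apply, show b e = MvPowerSeries.coeff e b from rfl]
  have key : ∀ p : ℕ × ℕ, p ≠ (0, 1) →
      MvPowerSeries.coeff (sp p) (MvPowerSeries.X (1 : Fin 2) : M) = 0 := by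
    intro p hne
    rw [MvPowerSeries.coeff_X, if_neg]
    intro hq
    apply hne
    have h0 := Finsupp.ext_iff.mp hq 0
    have h1 := Finsupp.ext_iff.mp hq 1
    rw [sp_apply0] at h0; rw [sp_apply1] at h1
    simp [Finsupp.single_apply] at h0 h1
    exact Prod.ext h0 h1
  by_cases h : 1 ≤ e 0 + e 1
  · rw [Finset.sum_eq_single ((0 : ℕ), (1 : ℕ))]
    · have hsp : sp ((0 : ℕ), (1 : ℕ)) = Finsupp.single 1 1 := by
        ext i; fin_cases i <;> simp [Finsupp.single_apply]
      rw [hsp, MvPowerSeries.coeff_index_single_self_X, one_mul, pow_one, pow_zero, one_mul]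
    · intro p hp hne
      rw [key p hne, zero_mul]
    · intro hmem
      exact absurd (by simp [Finset.mem_product]; omega) hmem
  · have he : e = 0 := wt_eq_zero (by simp [wt]; omega)
    subst he
    rw [hb 0 (by simp [wt]), Finset.sum_eq_zero]
    intro p hp
    simp only [Finset.mem_product, Finset.mem_range] at hp
    have : p = (0, 0) := by
      apply Prod.ext <;> simp <;> omega
    rw [key p (by rw [this]; decide), zero_mul]

lemma antidiagonal_sp_sum (r : ℕ × ℕ) (F : (Fin 2 →₀ ℕ) → (Fin 2 →₀ ℕ) → ℂ) :
    ∑ x ∈ Finset.HasAntidiagonal.antidiagonal (sp r), F x.1 x.2 =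
      ∑ y ∈ Finset.HasAntidiagonal.antidiagonal r.1 ×ˢ Finset.HasAntidiagonal.antidiagonal r.2,
        F (sp (y.1.1, y.2.1)) (sp (y.1.2, y.2.2)) := by
  refine Finset.sum_nbij' (i := fun x => ((x.1 0, x.2 0), (x.1 1, x.2 1)))
    (j := fun y => (sp (y.1.1, y.2.1), sp (y.1.2, y.2.2))) ?_ ?_ ?_ ?_ ?_
  · intro x hx
    rw [Finset.HasAntidiagonal.mem_antidiagonal] at hx
    have h0 := Finsupp.ext_iff.mp hx 0
    have h1 := Finsupp.ext_iff.mp hx 1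
    simp only [Finsupp.add_apply, sp_apply0, sp_apply1] at h0 h1
    simp [Finset.mem_product, Finset.HasAntidiagonal.mem_antidiagonal, h0, h1]
  · intro y hy
    simp only [Finset.mem_product, Finset.HasAntidiagonal.mem_antidiagonal] at hy
    rw [Finset.HasAntidiagonal.mem_antidiagonal]
    ext i
    fin_cases i
    · simpa using hy.1
    · simpa using hy.2
  · intro x hx
    simp only
    rw [← eq_sp x.1, ← eq_sp x.2]
  · intro y hy
    simp
  · intro x hx
    rw [← eq_sp x.1, ← eq_sp x.2]

lemma substXY_mul {a b : M} (ha : LO a 1) (hb : LO b 1) (f g : M) :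
    substXY a b (f * g) = substXY a b f * substXY a b g := by
  funext e
  set K := wt e + 1 with hK
  have hKe : wt e < K := by omega
  set T : (ℕ × ℕ) × (ℕ × ℕ) → ℂ := fun x =>
    MvPowerSeries.coeff (sp x.1) f * MvPowerSeries.coeff (sp x.2) g *
      MvPowerSeries.coeff e (a ^ (x.1.1 + x.2.1) * b ^ (x.1.2 + x.2.2)) with hT
  have hTzero : ∀ x : (ℕ × ℕ) × (ℕ × ℕ), wt e < x.1.1 + x.2.1 + (x.1.2 + x.2.2) → T x = 0 := by
    intro x hx
    rw [hT]
    simp only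
    rw [LO.pow_mul_pow ha hb _ _ e hx, mul_zero]
  -- the right hand side
  have hR : (substXY a b f * substXY a b g) e =
      ∑ x ∈ (Finset.range K ×ˢ Finset.range K) ×ˢ (Finset.range K ×ˢ Finset.range K), T x := by
    have h1 : (substXY a b f * substXY a b g) e =
        MvPowerSeries.coeff e (Sv a b K f * Sv a b K g) := by
      rw [show (substXY a b f * substXY a b g) e =
          MvPowerSeries.coeff e (substXY a b f * substXY a b g) from rfl,
        MvPowerSeries.coeff_mul, MvPowerSeries.coeff_mul]
      apply Finset.sum_congr rfl
      intro x hx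
      rw [Finset.HasAntidiagonal.mem_antidiagonal] at hx
      have hw : wt x.1 + wt x.2 = wt e := by rw [← wt_add, hx]
      have hx1 : wt x.1 < K := by omega
      have hx2 : wt x.2 < K := by omega
      rw [show MvPowerSeries.coeff x.1 (substXY a b f) = substXY a b f x.1 from rfl,
        show MvPowerSeries.coeff x.2 (substXY a b g) = substXY a b g x.2 from rfl,
        coeff_substXY ha hb f hx1, coeff_substXY ha hb g hx2]
    rw [h1, Sv, Sv, Finset.sum_mul_sum, ← Finset.sum_product', map_sum]
    apply Finset.sum_congr rfl
    intro x hx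
    have : MvPowerSeries.C (MvPowerSeries.coeff (sp x.1) f) * (a ^ x.1.1 * b ^ x.1.2) *
        (MvPowerSeries.C (MvPowerSeries.coeff (sp x.2) g) * (a ^ x.2.1 * b ^ x.2.2)) =
        MvPowerSeries.C (MvPowerSeries.coeff (sp x.1) f) *
          (MvPowerSeries.C (MvPowerSeries.coeff (sp x.2) g) *
            (a ^ (x.1.1 + x.2.1) * b ^ (x.1.2 + x.2.2))) := by
      rw [pow_add, pow_add]; ring
    rw [this, MvPowerSeries.coeff_C_mul, MvPowerSeries.coeff_C_mul, hT]
    simp only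
    ring
  -- the left hand side
  have hL : substXY a b (f * g) e =
      ∑ x ∈ ((Finset.range K ×ˢ Finset.range K) ×ˢ (Finset.range K ×ˢ Finset.range K)).filter
        (fun x => x.1.1 + x.2.1 < K ∧ x.1.2 + x.2.2 < K), T x := by
    rw [coeff_substXY ha hb (f * g) hKe, coeff_Sv]
    have step : ∀ r ∈ Finset.range K ×ˢ Finset.range K,
        MvPowerSeries.coeff (sp r) (f * g) * MvPowerSeries.coeff e (a ^ r.1 * b ^ r.2) =
        ∑ y ∈ Finset.HasAntidiagonal.antidiagonal r.1 ×ˢ Finset.HasAntidiagonal.antidiagonal r.2,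
          T ((y.1.1, y.2.1), (y.1.2, y.2.2)) := by
      intro r _
      have h2 : MvPowerSeries.coeff (sp r) (f * g) =
          ∑ y ∈ Finset.HasAntidiagonal.antidiagonal r.1 ×ˢ Finset.HasAntidiagonal.antidiagonal r.2,
            MvPowerSeries.coeff (sp (y.1.1, y.2.1)) f *
              MvPowerSeries.coeff (sp (y.1.2, y.2.2)) g := by
        rw [MvPowerSeries.coeff_mul]
        exact antidiagonal_sp_sum r (fun u v => MvPowerSeries.coeff u f * MvPowerSeries.coeff v g)
      rw [h2, Finset.sum_mul]
      apply Finset.sum_congr rfl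
      intro y hy
      simp only [Finset.mem_product, Finset.HasAntidiagonal.mem_antidiagonal] at hy
      rw [hT]
      simp only
      rw [hy.1, hy.2]
    rw [Finset.sum_congr rfl step, Finset.sum_sigma']
    refine Finset.sum_nbij' (i := fun x => ((x.2.1.1, x.2.2.1), (x.2.1.2, x.2.2.2)))
      (j := fun x => ⟨(x.1.1 + x.2.1, x.1.2 + x.2.2), ((x.1.1, x.2.1), (x.1.2, x.2.2))⟩)
      ?_ ?_ ?_ ?_ ?_
    · rintro ⟨⟨r1, r2⟩, ⟨⟨i, j⟩, ⟨k, l⟩⟩⟩ hx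
      simp only [Finset.mem_sigma, Finset.mem_product, Finset.mem_range,
        Finset.HasAntidiagonal.mem_antidiagonal] at hx
      simp only [Finset.mem_filter, Finset.mem_product, Finset.mem_range]
      omega
    · rintro ⟨⟨p1, p2⟩, ⟨q1, q2⟩⟩ hx
      simp only [Finset.mem_filter, Finset.mem_product, Finset.mem_range] at hx
      simp only [Finset.mem_sigma, Finset.mem_product, Finset.mem_range,
        Finset.HasAntidiagonal.mem_antidiagonal]
      exact ⟨hx.2, trivial, trivial⟩
    · rintro ⟨⟨r1, r2⟩, ⟨⟨i, j⟩, ⟨k, l⟩⟩⟩ hx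
      simp only [Finset.mem_sigma, Finset.mem_product, Finset.mem_range,
        Finset.HasAntidiagonal.mem_antidiagonal] at hx
      obtain ⟨⟨h1, h2⟩, h3, h4⟩ := hx
      simp only
      rw [h3, h4]
    · rintro ⟨⟨p1, p2⟩, ⟨q1, q2⟩⟩ hx
      rfl
    · rintro ⟨⟨r1, r2⟩, ⟨⟨i, j⟩, ⟨k, l⟩⟩⟩ hx
      rfl
  rw [hL, hR] at *
  rw [Finset.sum_filter_of_ne]
  intro x hx hne
  by_contra hc
  apply hne
  apply hTzero
  simp only [Finset.mem_product, Finset.mem_range] at hx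
  omega

lemma constantCoeff_substXY (a b f : M) :
    MvPowerSeries.constantCoeff (substXY a b f) =
      MvPowerSeries.constantCoeff f := by
  rw [← MvPowerSeries.coeff_zero_eq_constantCoeff,
    show MvPowerSeries.coeff 0 (substXY a b f) = substXY a b f 0 from rfl, substXY_apply]
  have h0 : ((0 : Fin 2 →₀ ℕ)) 0 + ((0 : Fin 2 →₀ ℕ)) 1 + 1 = 1 := by simp
  rw [h0, Finset.range_one, Finset.singleton_product_singleton, Finset.sum_singleton]
  have hsp : sp ((0 : ℕ), (0 : ℕ)) = 0 := by ext i; fin_cases i <;> simp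
  rw [hsp]
  simp

lemma LO.substXY_lo {a b c : M} (hc : LO c 1) : LO (substXY a b c) 1 :=
  LO.one_of (by
    rw [constantCoeff_substXY, ← MvPowerSeries.coeff_zero_eq_constantCoeff]
    exact hc 0 (by simp [wt]))

/-- `substXY a b` as a ring homomorphism. -/
noncomputable def substHom {a b : M} (ha : LO a 1) (hb : LO b 1) :
    MvPowerSeries (Fin 2) ℂ →+* MvPowerSeries (Fin 2) ℂ where
  toFun := substXY a b
  map_one' := substXY_one a b
  map_mul' := substXY_mul ha hb
  map_zero' := by simpa using substXY_C a b 0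
  map_add' := substXY_add a b

lemma substXY_pow {a b : M} (ha : LO a 1) (hb : LO b 1) (f : M) (n : ℕ) :
    substXY a b (f ^ n) = substXY a b f ^ n :=
  map_pow (substHom ha hb) f n

lemma substXY_inv {a b : M} (ha : LO a 1) (hb : LO b 1) (u : M)
    (hu : MvPowerSeries.constantCoeff u ≠ 0) :
    substXY a b u⁻¹ = (substXY a b u)⁻¹ := by
  have h1 : substXY a b u⁻¹ * substXY a b u = 1 := by
    rw [← substXY_mul ha hb, MvPowerSeries.inv_mul_cancel u hu, substXY_one]
  have h2 : MvPowerSeries.constantCoeff (substXY a b u) ≠ 0 := by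
    rw [constantCoeff_substXY]; exact hu
  rw [MvPowerSeries.eq_inv_iff_mul_eq_one h2]
  exact h1

/-- Chain rule for substitution. -/
lemma substXY_comp {a b c d : M} (ha : LO a 1) (hb : LO b 1) (hc : LO c 1) (hd : LO d 1)
    (f : M) :
    substXY a b (substXY c d f) = substXY (substXY a b c) (substXY a b d) f := by
  have hA : LO (substXY a b c) 1 := hc.substXY_lo
  have hB : LO (substXY a b d) 1 := hd.substXY_lo
  funext e
  set K := wt e + 1 with hK
  have hKe : wt e < K := by omega
  -- right hand side
  rw [coeff_substXY hA hB f (show wt e < 2 * K by omega), coeff_Sv]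
  -- left hand side
  rw [coeff_substXY ha hb (substXY c d f) hKe, coeff_Sv]
  have step : ∀ p ∈ Finset.range K ×ˢ Finset.range K,
      MvPowerSeries.coeff (sp p) (substXY c d f) *
        MvPowerSeries.coeff e (a ^ p.1 * b ^ p.2) =
      ∑ r ∈ Finset.range (2 * K) ×ˢ Finset.range (2 * K),
        MvPowerSeries.coeff (sp r) f *
          (MvPowerSeries.coeff (sp p) (c ^ r.1 * d ^ r.2) *
            MvPowerSeries.coeff e (a ^ p.1 * b ^ p.2)) := by
    intro p hp
    simp only [Finset.mem_product, Finset.mem_range] at hp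
    have hwp : wt (sp p) < 2 * K := by rw [wt_sp]; omega
    rw [show MvPowerSeries.coeff (sp p) (substXY c d f) = substXY c d f (sp p) from rfl,
      coeff_substXY hc hd f hwp, coeff_Sv, Finset.sum_mul]
    exact Finset.sum_congr rfl fun r _ => by ring
  rw [Finset.sum_congr rfl step, Finset.sum_comm]
  apply Finset.sum_congr rfl
  intro r _
  rw [← Finset.mul_sum]
  congr 1
  have : ∑ p ∈ Finset.range K ×ˢ Finset.range K,
      MvPowerSeries.coeff (sp p) (c ^ r.1 * d ^ r.2) *
        MvPowerSeries.coeff e (a ^ p.1 * b ^ p.2) =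
      MvPowerSeries.coeff e (Sv a b K (c ^ r.1 * d ^ r.2)) := (coeff_Sv a b K _ e).symm
  rw [this, ← coeff_substXY ha hb _ hKe,
    show substXY a b (c ^ r.1 * d ^ r.2) e =
      MvPowerSeries.coeff e (substXY a b (c ^ r.1 * d ^ r.2)) from rfl,
    substXY_mul ha hb, substXY_pow ha hb, substXY_pow ha hb]

lemma hXlo : LO (Xv : M) 1 := LO.one_of (MvPowerSeries.constantCoeff_X 0)
lemma hYlo : LO (Yv : M) 1 := LO.one_of (MvPowerSeries.constantCoeff_X 1)

lemma LO.xmul (u : M) : LO (Xv * u) 1 := hXlo.mul (LO.zero u)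
lemma LO.ymul (u : M) : LO (Yv * u) 1 := hYlo.mul (LO.zero u)

lemma const_one_add {u : M} (hu : LO u 1) :
    MvPowerSeries.constantCoeff (1 + u) ≠ 0 := by
  have : MvPowerSeries.constantCoeff u = 0 := by
    rw [← MvPowerSeries.coeff_zero_eq_constantCoeff]
    exact hu 0 (by simp [wt])
  rw [map_add, map_one, this, add_zero]
  exact one_ne_zero

lemma substXY_one_add {a b : M} (u : M) :
    substXY a b (1 + u) = 1 + substXY a b u := by
  rw [substXY_add, substXY_one]

/-- cancel-inverses lemma -/
lemma mul_inv_eq_mul_inv {p q u v : M}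
    (hu : MvPowerSeries.constantCoeff u ≠ 0)
    (hv : MvPowerSeries.constantCoeff v ≠ 0)
    (h : p * v = q * u) : p * u⁻¹ = q * v⁻¹ := by
  have h1 := MvPowerSeries.mul_inv_cancel u hu
  have h2 := MvPowerSeries.mul_inv_cancel v hv
  calc p * u⁻¹ = p * u⁻¹ * (v * v⁻¹) := by rw [h2, mul_one]
    _ = p * v * (u⁻¹ * v⁻¹) := by ring
    _ = q * u * (u⁻¹ * v⁻¹) := by rw [h]
    _ = q * v⁻¹ * (u * u⁻¹) := by ring
    _ = q * v⁻¹ := by rw [h1, mul_one]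

theorem pentagon :
    substXY Xv (Yv * (1 + Xv)) ∘ substXY (Xv * (1 + Yv)⁻¹) Yv =
      substXY (Xv * (1 + Yv)⁻¹) Yv ∘ substXY (Xv * (1 + Xv * Yv)⁻¹) (Yv * (1 + Xv * Yv)) ∘
        substXY Xv (Yv * (1 + Xv)) := by
  have hYX : LO ((Yv : M) * (1 + Xv)) 1 := LO.ymul _
  have hXw : LO ((Xv : M) * (1 + Yv)⁻¹) 1 := LO.xmul _
  have hXxy : LO ((Xv : M) * (1 + Xv * Yv)⁻¹) 1 := LO.xmul _
  have hYxy : LO ((Yv : M) * (1 + Xv * Yv)) 1 := LO.ymul _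
  have hcY : MvPowerSeries.constantCoeff (1 + Yv) ≠ 0 := const_one_add hYlo
  have hcXY : MvPowerSeries.constantCoeff (1 + Xv * Yv) ≠ 0 :=
    const_one_add (LO.xmul _)
  set w : M := (1 + Yv)⁻¹ with hwdef
  have hw : (1 + Yv) * w = 1 := MvPowerSeries.mul_inv_cancel _ hcY
  set v : M := 1 + Xv * w * Yv with hvdef
  have hvc : MvPowerSeries.constantCoeff v ≠ 0 := by
    apply const_one_add
    have : (Xv : M) * w * Yv = Xv * (w * Yv) := by ring
    rw [this]; exact LO.xmul _
  have hv1 : v * v⁻¹ = 1 := MvPowerSeries.mul_inv_cancel _ hvc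
  have hcU : MvPowerSeries.constantCoeff (1 + Yv * (1 + Xv)) ≠ 0 :=
    const_one_add (LO.ymul _)
  funext f
  show substXY Xv (Yv * (1 + Xv)) (substXY (Xv * (1 + Yv)⁻¹) Yv f) =
    substXY (Xv * (1 + Yv)⁻¹) Yv
      (substXY (Xv * (1 + Xv * Yv)⁻¹) (Yv * (1 + Xv * Yv)) (substXY Xv (Yv * (1 + Xv)) f))
  rw [substXY_comp hXlo hYX hXw hYlo f,
      substXY_comp hXw hYlo hXxy hYxy (substXY Xv (Yv * (1 + Xv)) f),
      substXY_comp (hXxy.substXY_lo) (hYxy.substXY_lo) hXlo hYX f]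
  -- compute the LHS pair
  have hB : substXY Xv (Yv * (1 + Xv)) (Yv : M) = Yv * (1 + Xv) := substXY_X1 _ _ hYX
  have hA : substXY Xv (Yv * (1 + Xv)) ((Xv : M) * (1 + Yv)⁻¹) =
      Xv * (1 + Yv * (1 + Xv))⁻¹ := by
    rw [substXY_mul hXlo hYX, substXY_X0 _ _ hXlo,
      substXY_inv hXlo hYX _ hcY, substXY_one_add, substXY_X1 _ _ hYX]
  -- compute the RHS inner pair
  have hA23 : substXY (Xv * (1 + Yv)⁻¹) Yv ((Xv : M) * (1 + Xv * Yv)⁻¹) =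
      Xv * w * v⁻¹ := by
    rw [substXY_mul hXw hYlo, substXY_X0 _ _ hXw,
      substXY_inv hXw hYlo _ hcXY, substXY_one_add,
      substXY_mul hXw hYlo, substXY_X0 _ _ hXw, substXY_X1 _ _ hYlo]
  have hB23 : substXY (Xv * (1 + Yv)⁻¹) Yv ((Yv : M) * (1 + Xv * Yv)) =
      Yv * v := by
    rw [substXY_mul hXw hYlo, substXY_X1 _ _ hYlo, substXY_one_add,
      substXY_mul hXw hYlo, substXY_X0 _ _ hXw, substXY_X1 _ _ hYlo]
  rw [hA, hB]
  -- compute the RHS outer pair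
  have hA' : substXY (substXY (Xv * (1 + Yv)⁻¹) Yv ((Xv : M) * (1 + Xv * Yv)⁻¹))
      (substXY (Xv * (1 + Yv)⁻¹) Yv ((Yv : M) * (1 + Xv * Yv))) (Xv : M) =
      Xv * w * v⁻¹ := by
    rw [substXY_X0 _ _ (by rw [hA23]; exact (LO.xmul _).mul (LO.zero _)), hA23]
  have hB' : substXY (substXY (Xv * (1 + Yv)⁻¹) Yv ((Xv : M) * (1 + Xv * Yv)⁻¹))
      (substXY (Xv * (1 + Yv)⁻¹) Yv ((Yv : M) * (1 + Xv * Yv))) ((Yv : M) * (1 + Xv)) =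
      Yv * v * (1 + Xv * w * v⁻¹) := by
    rw [substXY_mul (by rw [hA23]; exact (LO.xmul _).mul (LO.zero _))
        (by rw [hB23]; exact LO.ymul _),
      substXY_X1 _ _ (by rw [hB23]; exact LO.ymul _), hB23, substXY_one_add,
      substXY_X0 _ _ (by rw [hA23]; exact (LO.xmul _).mul (LO.zero _)), hA23]
  rw [hA', hB']
  -- the two remaining power series identities
  have idA : (Xv : M) * (1 + Yv * (1 + Xv))⁻¹ = Xv * w * v⁻¹ := by
    apply mul_inv_eq_mul_inv hcU hvc
    rw [hvdef]
    linear_combination (-(Xv : M)) * hw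
  have idB : (Yv : M) * (1 + Xv) = Yv * v * (1 + Xv * w * v⁻¹) := by
    have expand : (Yv : M) * v * (1 + Xv * w * v⁻¹) =
        Yv * v + Yv * Xv * w * (v * v⁻¹) := by ring
    rw [expand, hv1, mul_one, hvdef]
    linear_combination (-(Xv : M)) * Yv * hw
  rw [idA, idB]
end PentagonAux

/-- The pentagon identity `θ₁ ∘ θ₂ = θ₂ ∘ θ₃ ∘ θ₁` in the tropical vertex group. -/
theorem stmt11 : theta1 ∘ theta2 = theta2 ∘ theta3 ∘ theta1 := pentagon
end

section
/- There exists a unique formal power series g(t) = Σ_{k≥1} g_k t^k ∈ t·ℚ[[t]] with the following property: in the formal power series ring ℚ[[x,y,z]], writing log(1 + x + y + z + g(xyz)) = Σ_{k≥1} ((-1)^{k+1}/k)(x+y+z+g(xyz))^k, the coefficient of the monomial (xyz)^l is zero for every l ≥ 1. Moreover g_1 = −2 and g_2 = 5. -/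
open Finset

/-- The series `g(xyz) ∈ ℚ[[x,y,z]]` obtained from `g ∈ ℚ[[t]]` by substituting
`t = xyz`: its coefficient on the monomial `x^a y^b z^c` is the `a`-th coefficient
of `g` if `a = b = c`, and `0` otherwise. -/
noncomputable def diagSubst (g : PowerSeries ℚ) : MvPowerSeries (Fin 3) ℚ :=
  fun d => if d 0 = d 1 ∧ d 1 = d 2 then PowerSeries.coeff (d 0) g else 0

/-- `g` is normalized if `g ∈ t·ℚ[[t]]` and
`log(1 + x + y + z + g(xyz)) = Σ_{k≥1} ((-1)^{k+1}/k)(x+y+z+g(xyz))^k`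
has vanishing coefficient on `(xyz)^l` for all `l ≥ 1`.  Since `x+y+z+g(xyz)` has
vanishing constant term, only the terms with `k ≤ 3l` contribute to the coefficient
of `(xyz)^l`, so the logarithm may be truncated there. -/
noncomputable def IsNormalized (g : PowerSeries ℚ) : Prop :=
  PowerSeries.constantCoeff g = 0 ∧
  ∀ l : ℕ, 1 ≤ l →
    MvPowerSeries.coeff (Finsupp.equivFunOnFinite.symm fun _ : Fin 3 => l)
      (∑ k ∈ Finset.Icc 1 (3 * l),
        ((-1 : ℚ) ^ (k + 1) / k) •
          (MvPowerSeries.X 0 + MvPowerSeries.X 1 + MvPowerSeries.X 2 +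
            diagSubst g) ^ k) = 0

noncomputable def dla (l : ℕ) : Fin 3 →₀ ℕ := Finsupp.equivFunOnFinite.symm fun _ : Fin 3 => l

lemma dla_apply (l : ℕ) (i : Fin 3) : dla l i = l := rfl

noncomputable def Sxyz : MvPowerSeries (Fin 3) ℚ :=
  MvPowerSeries.X 0 + MvPowerSeries.X 1 + MvPowerSeries.X 2

noncomputable def Fc (l : ℕ) (g : PowerSeries ℚ) : ℚ :=
  MvPowerSeries.coeff (dla l)
    (∑ k ∈ Finset.Icc 1 (3 * l),
      ((-1 : ℚ) ^ (k + 1) / k) • (Sxyz + diagSubst g) ^ k)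

lemma coeff_diagSubst (g : PowerSeries ℚ) (d : Fin 3 →₀ ℕ) :
    MvPowerSeries.coeff d (diagSubst g) =
      if d 0 = d 1 ∧ d 1 = d 2 then PowerSeries.coeff (d 0) g else 0 := rfl

lemma coeff_diagSubst_dla (g : PowerSeries ℚ) (l : ℕ) :
    MvPowerSeries.coeff (dla l) (diagSubst g) = PowerSeries.coeff l g := by
  rw [coeff_diagSubst]
  simp [dla_apply]

lemma constCoeff_SB (h : PowerSeries ℚ) (h0 : PowerSeries.constantCoeff h = 0) :
    MvPowerSeries.coeff 0 (Sxyz + diagSubst h) = 0 := by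
  rw [map_add, coeff_diagSubst]
  have : ((0 : Fin 3 →₀ ℕ) 0 = (0 : Fin 3 →₀ ℕ) 1 ∧ (0 : Fin 3 →₀ ℕ) 1 = (0 : Fin 3 →₀ ℕ) 2) := by simp
  rw [if_pos this]
  have h00 : PowerSeries.coeff ((0 : Fin 3 →₀ ℕ) 0) h = 0 := by
    simpa [PowerSeries.coeff_zero_eq_constantCoeff] using h0
  rw [h00]
  simp [Sxyz, MvPowerSeries.coeff_zero_eq_constantCoeff]

lemma keyDiff (l : ℕ) (hl : 1 ≤ l) (g h : PowerSeries ℚ)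
    (h0 : PowerSeries.constantCoeff h = 0)
    (hagree : ∀ j, j < l → PowerSeries.coeff j g = PowerSeries.coeff j h) :
    Fc l g = Fc l h + (PowerSeries.coeff l g - PowerSeries.coeff l h) := by
  classical
  set B := Sxyz + diagSubst h with hB
  set D : MvPowerSeries (Fin 3) ℚ := diagSubst g - diagSubst h with hD
  have hBD : Sxyz + diagSubst g = B + D := by rw [hB, hD]; ring
  have hDcoeff : ∀ e : Fin 3 →₀ ℕ, MvPowerSeries.coeff e D ≠ 0 →
      (e 0 = e 1 ∧ e 1 = e 2) ∧ l ≤ e 0 := by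
    intro e he
    rw [hD, map_sub, coeff_diagSubst, coeff_diagSubst] at he
    by_cases hd : e 0 = e 1 ∧ e 1 = e 2
    · rw [if_pos hd, if_pos hd] at he
      refine ⟨hd, ?_⟩
      by_contra hlt
      exact he (by rw [hagree _ (lt_of_not_ge hlt)]; ring)
    · rw [if_neg hd, if_neg hd] at he
      exact absurd (by ring) he
  have hB0 : MvPowerSeries.coeff 0 B = 0 := constCoeff_SB h h0
  -- coefficient of anything times D*D vanishes at dla l
  have hDD : ∀ v : MvPowerSeries (Fin 3) ℚ,
      MvPowerSeries.coeff (dla l) (v * (D * D)) = 0 := by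
    intro v
    rw [MvPowerSeries.coeff_mul]
    apply Finset.sum_eq_zero
    intro p hp
    rw [Finset.HasAntidiagonal.mem_antidiagonal] at hp
    have hple : p.1 0 + p.2 0 = l := by
      have := congrArg (fun f : Fin 3 →₀ ℕ => f 0) hp
      simpa [dla_apply] using this
    have hz : MvPowerSeries.coeff p.2 (D * D) = 0 := by
      rw [MvPowerSeries.coeff_mul]
      apply Finset.sum_eq_zero
      intro q hq
      rw [Finset.HasAntidiagonal.mem_antidiagonal] at hq
      by_cases h1 : MvPowerSeries.coeff q.1 D = 0
      · rw [h1, zero_mul]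
      by_cases h2 : MvPowerSeries.coeff q.2 D = 0
      · rw [h2, mul_zero]
      exfalso
      have e1 := (hDcoeff _ h1).2
      have e2 := (hDcoeff _ h2).2
      have hsum : q.1 0 + q.2 0 = p.2 0 := by
        have := congrArg (fun f : Fin 3 →₀ ℕ => f 0) hq
        simpa using this
      omega
    rw [hz, mul_zero]
  -- coefficient of B^m * D at dla l
  have hBD1 : ∀ m : ℕ, MvPowerSeries.coeff (dla l) (B ^ m * D) =
      (if m = 0 then 1 else 0) * MvPowerSeries.coeff (dla l) D := by
    intro m
    rw [MvPowerSeries.coeff_mul]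
    rw [Finset.sum_eq_single ((0 : Fin 3 →₀ ℕ), dla l)]
    · congr 1
      have : MvPowerSeries.coeff 0 (B ^ m) =
          (MvPowerSeries.coeff 0 B) ^ m := by
        simp [MvPowerSeries.coeff_zero_eq_constantCoeff, map_pow]
      rw [this, hB0]
      cases m with
      | zero => simp
      | succ m => simp
    · intro q hq hne
      rw [Finset.HasAntidiagonal.mem_antidiagonal] at hq
      by_cases h2 : MvPowerSeries.coeff q.2 D = 0
      · rw [h2, mul_zero]
      exfalso
      obtain ⟨hdiag, hle⟩ := hDcoeff _ h2
      have hsum : q.1 0 + q.2 0 = l := by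
        have := congrArg (fun f : Fin 3 →₀ ℕ => f 0) hq
        simpa [dla_apply] using this
      have hq20 : q.2 0 = l := by omega
      have hq2 : q.2 = dla l := by
        ext i
        fin_cases i <;> simp [dla_apply] <;> omega
      have hq1 : q.1 = 0 := by
        have := hq
        rw [hq2] at this
        exact add_eq_right.mp this
      exact hne (Prod.ext hq1 hq2)
    · intro habs
      exact absurd (by rw [Finset.HasAntidiagonal.mem_antidiagonal]; simp) habs
  -- per power decomposition
  have hk : ∀ k, 1 ≤ k → MvPowerSeries.coeff (dla l) ((B + D) ^ k) =
      MvPowerSeries.coeff (dla l) (B ^ k) +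
        (if k = 1 then MvPowerSeries.coeff (dla l) D else 0) := by
    intro k hk1
    rw [add_pow, map_sum]
    have hterm : ∀ m ∈ range (k + 1),
        MvPowerSeries.coeff (dla l) (B ^ m * D ^ (k - m) * (↑(k.choose m) : MvPowerSeries (Fin 3) ℚ)) =
        if m = k then MvPowerSeries.coeff (dla l) (B ^ k)
        else if m = k - 1 then (if k = 1 then MvPowerSeries.coeff (dla l) D else 0)
        else 0 := by
      intro m hm
      rw [Finset.mem_range] at hm
      by_cases hmk : m = k
      · subst hmk
        simp
      rw [if_neg hmk]
      by_cases hm1 : m = k - 1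
      · subst hm1
        rw [if_pos rfl]
        have hkk : k - (k - 1) = 1 := by omega
        rw [hkk, pow_one]
        have hch : k.choose (k - 1) = k := by
          rw [Nat.choose_symm hk1, Nat.choose_one_right]
        rw [hch, show B ^ (k - 1) * D * ((k : ℕ) : MvPowerSeries (Fin 3) ℚ) =
          (k : ℕ) • (B ^ (k - 1) * D) from by rw [nsmul_eq_mul]; ring, map_nsmul, hBD1]
        by_cases hk' : k = 1
        · subst hk'; norm_num
        · rw [if_neg (by omega : ¬ k - 1 = 0), if_neg hk']
          simp
      · rw [if_neg hm1]
        have h2 : 2 ≤ k - m := by omega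
        have hDpow : D ^ (k - m) = D ^ (k - m - 2) * (D * D) := by
          rw [← pow_two, ← pow_add]
          congr 1
          omega
        rw [hDpow, show B ^ m * (D ^ (k - m - 2) * (D * D)) * (↑(k.choose m) : MvPowerSeries (Fin 3) ℚ) =
          (B ^ m * D ^ (k - m - 2) * ↑(k.choose m)) * (D * D) from by ring, hDD]
    rw [Finset.sum_congr rfl hterm]
    have hne : k - 1 ≠ k := by omega
    have hsub : ({k - 1, k} : Finset ℕ) ⊆ range (k + 1) := by
      intro x hx
      simp only [Finset.mem_insert, Finset.mem_singleton] at hx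
      rw [Finset.mem_range]
      omega
    rw [← Finset.sum_subset hsub (by
      intro x _ hx
      simp only [Finset.mem_insert, Finset.mem_singleton, not_or] at hx
      rw [if_neg hx.2, if_neg hx.1])]
    rw [Finset.sum_insert (by simpa using hne), Finset.sum_singleton]
    rw [if_neg hne, if_pos rfl, if_pos rfl, add_comm]
  -- assemble
  have h1mem : (1 : ℕ) ∈ Finset.Icc 1 (3 * l) := by
    rw [Finset.mem_Icc]
    omega
  have hDval : MvPowerSeries.coeff (dla l) D =
      PowerSeries.coeff l g - PowerSeries.coeff l h := by
    rw [hD, map_sub, coeff_diagSubst_dla, coeff_diagSubst_dla]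
  unfold Fc
  rw [hBD, map_sum, map_sum]
  have : ∀ k ∈ Finset.Icc 1 (3 * l),
      MvPowerSeries.coeff (dla l) (((-1 : ℚ) ^ (k + 1) / k) • (B + D) ^ k) =
      MvPowerSeries.coeff (dla l) (((-1 : ℚ) ^ (k + 1) / k) • (Sxyz + diagSubst h) ^ k) +
        ((-1 : ℚ) ^ (k + 1) / k) * (if k = 1 then MvPowerSeries.coeff (dla l) D else 0) := by
    intro k hkm
    rw [Finset.mem_Icc] at hkm
    rw [map_smul, map_smul, hk k hkm.1, ← hB]
    rw [smul_eq_mul, smul_eq_mul, mul_add]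
  rw [Finset.sum_congr rfl this, Finset.sum_add_distrib]
  congr 1
  rw [Finset.sum_eq_single 1]
  · norm_num [hDval]
  · intro k _ hk1
    rw [if_neg hk1, mul_zero]
  · intro habs
    exact absurd h1mem habs

noncomputable def P3 : MvPolynomial (Fin 3) ℚ :=
  MvPolynomial.X 0 + MvPolynomial.X 1 + MvPolynomial.X 2

noncomputable def M3 : MvPolynomial (Fin 3) ℚ := MvPolynomial.monomial (dla 1) (-2)

lemma coeff_p_pow (j n : ℕ) :
    MvPolynomial.coeff (dla j) (P3 ^ n) =
      if 3 * j = n then (Nat.multinomial Finset.univ (fun _ : Fin 3 => j) : ℚ) else 0 := by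
  classical
  have hX : P3 = ∑ i : Fin 3, MvPolynomial.X i := by
    rw [Fin.sum_univ_three]; rfl
  rw [hX, Finset.sum_pow_eq_sum_piAntidiag, MvPolynomial.coeff_sum]
  have hmono : ∀ k : Fin 3 → ℕ,
      (∏ i : Fin 3, (MvPolynomial.X i : MvPolynomial (Fin 3) ℚ) ^ k i) =
        MvPolynomial.monomial (Finsupp.equivFunOnFinite.symm k) 1 := by
    intro k
    rw [← MvPolynomial.prod_X_pow_eq_monomial]
    refine (Finset.prod_subset (Finset.subset_univ _) ?_).symm
    intro x _ hx
    rw [Finsupp.notMem_support_iff] at hx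
    have : k x = 0 := hx
    simp [this]
  have hterm : ∀ k : Fin 3 → ℕ,
      MvPolynomial.coeff (dla j)
        ((Nat.multinomial Finset.univ k : MvPolynomial (Fin 3) ℚ) *
          ∏ i : Fin 3, MvPolynomial.X i ^ k i) =
      (Nat.multinomial Finset.univ k : ℚ) *
        (if Finsupp.equivFunOnFinite.symm k = dla j then 1 else 0) := by
    intro k
    rw [hmono, ← nsmul_eq_mul, MvPolynomial.coeff_smul, MvPolynomial.coeff_monomial]
    simp [nsmul_eq_mul]
  rw [Finset.sum_congr rfl fun k _ => hterm k]
  by_cases hc : 3 * j = n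
  · rw [if_pos hc, Finset.sum_eq_single (fun _ : Fin 3 => j)]
    · rw [if_pos (show Finsupp.equivFunOnFinite.symm (fun _ : Fin 3 => j) = dla j from rfl), mul_one]
    · intro k _ hkne
      rw [if_neg, mul_zero]
      intro hEq
      exact hkne (Finsupp.equivFunOnFinite.symm.injective hEq)
    · intro habs
      exfalso
      apply habs
      rw [Finset.mem_piAntidiag]
      refine ⟨?_, fun i _ => Finset.mem_univ i⟩
      rw [Fin.sum_univ_three]
      omega
  · rw [if_neg hc]
    apply Finset.sum_eq_zero
    intro k hk
    rw [Finset.mem_piAntidiag] at hk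
    rw [if_neg, mul_zero]
    intro hEq
    apply hc
    have hkj : k = fun _ : Fin 3 => j := Finsupp.equivFunOnFinite.symm.injective hEq
    rw [hkj, Fin.sum_univ_three] at hk
    omega

lemma coeff_pm (n i : ℕ) :
    MvPolynomial.coeff (dla 2) (P3 ^ n * M3 ^ i) =
      if i ≤ 2 then
        (-2 : ℚ) ^ i *
          (if 3 * (2 - i) = n then
            (Nat.multinomial Finset.univ (fun _ : Fin 3 => 2 - i) : ℚ) else 0)
      else 0 := by
  classical
  rw [M3, MvPolynomial.monomial_pow, MvPolynomial.coeff_mul_monomial']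
  by_cases hi : i ≤ 2
  · rw [if_pos hi, if_pos]
    · have hsub : dla 2 - i • dla 1 = dla (2 - i) := by
        ext a
        rw [Finsupp.tsub_apply, Finsupp.smul_apply, dla_apply, dla_apply, dla_apply]
        simp
      rw [hsub, coeff_p_pow]
      ring
    · rw [Finsupp.le_def]
      intro a
      rw [Finsupp.smul_apply, dla_apply, dla_apply]
      simpa using hi
  · rw [if_neg hi, if_neg]
    rw [Finsupp.le_def]
    push_neg
    refine ⟨0, ?_⟩
    rw [Finsupp.smul_apply, dla_apply, dla_apply]
    simpa using hi

lemma coeff_q_pow (k : ℕ) :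
    MvPolynomial.coeff (dla 2) ((P3 + M3) ^ k) =
      ∑ j ∈ range (k + 1), (k.choose j : ℚ) *
        (if k - j ≤ 2 then
          (-2 : ℚ) ^ (k - j) *
            (if 3 * (2 - (k - j)) = j then
              (Nat.multinomial Finset.univ (fun _ : Fin 3 => 2 - (k - j)) : ℚ) else 0)
        else 0) := by
  rw [add_pow, MvPolynomial.coeff_sum]
  refine Finset.sum_congr rfl fun j hj => ?_
  rw [show P3 ^ j * M3 ^ (k - j) * ((k.choose j : ℕ) : MvPolynomial (Fin 3) ℚ) =
    (k.choose j : ℕ) • (P3 ^ j * M3 ^ (k - j)) from by rw [nsmul_eq_mul]; ring]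
  rw [MvPolynomial.coeff_smul, coeff_pm]
  simp [nsmul_eq_mul, mul_comm]

lemma mult0 : Nat.multinomial Finset.univ (fun _ : Fin 3 => 0) = 1 := by decide
lemma mult1 : Nat.multinomial Finset.univ (fun _ : Fin 3 => 1) = 6 := by decide
lemma mult2 : Nat.multinomial Finset.univ (fun _ : Fin 3 => 2) = 90 := by decide


lemma isNormalized_iff (g : PowerSeries ℚ) :
    IsNormalized g ↔ (PowerSeries.constantCoeff g = 0 ∧ ∀ l, 1 ≤ l → Fc l g = 0) :=
  Iff.rfl

lemma Fc_eq_poly (l : ℕ) (g : PowerSeries ℚ) (Q : MvPolynomial (Fin 3) ℚ)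
    (hQ : Sxyz + diagSubst g = ↑Q) :
    Fc l g = ∑ k ∈ Finset.Icc 1 (3 * l),
      ((-1 : ℚ) ^ (k + 1) / k) * MvPolynomial.coeff (dla l) (Q ^ k) := by
  unfold Fc
  rw [hQ, map_sum]
  refine Finset.sum_congr rfl fun k _ => ?_
  rw [map_smul, ← MvPolynomial.coe_pow, MvPolynomial.coeff_coe, smul_eq_mul]

lemma diagSubst_zero : diagSubst 0 = 0 := by
  apply MvPowerSeries.ext
  intro d
  rw [coeff_diagSubst]
  simp

lemma Fc_one_zero : Fc 1 0 = 2 := by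
  have hS0 : Sxyz + diagSubst 0 = (P3 : MvPowerSeries (Fin 3) ℚ) := by
    rw [diagSubst_zero, add_zero, P3, Sxyz]
    push_cast
    rfl
  rw [Fc_eq_poly 1 0 P3 hS0]
  have hIcc : Finset.Icc 1 (3 * 1) = {1, 2, 3} := by decide
  rw [hIcc, Finset.sum_insert (by decide), Finset.sum_insert (by decide),
    Finset.sum_singleton]
  simp only [coeff_p_pow, mult1]
  norm_num

lemma diagSubst_monomial :
    diagSubst ((PowerSeries.monomial 1) (-2)) = MvPowerSeries.monomial (dla 1) (-2) := by
  apply MvPowerSeries.ext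
  intro e
  rw [coeff_diagSubst, MvPowerSeries.coeff_monomial]
  by_cases h : e = dla 1
  · subst h
    simp [dla_apply, PowerSeries.coeff_monomial]
  · rw [if_neg h]
    by_cases hd : e 0 = e 1 ∧ e 1 = e 2
    · rw [if_pos hd, PowerSeries.coeff_monomial, if_neg]
      intro h1
      apply h
      obtain ⟨hd1, hd2⟩ := hd
      ext i
      fin_cases i <;> simp [dla_apply] <;> omega
    · rw [if_neg hd]

lemma Fc_two_val : Fc 2 ((PowerSeries.monomial 1) (-2)) = -5 := by
  have hS2 : Sxyz + diagSubst ((PowerSeries.monomial 1) (-2)) =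
      ((P3 + M3 : MvPolynomial (Fin 3) ℚ) : MvPowerSeries (Fin 3) ℚ) := by
    rw [diagSubst_monomial, P3, M3, Sxyz]
    push_cast
    rfl
  rw [Fc_eq_poly 2 _ (P3 + M3) hS2]
  have hIcc : Finset.Icc 1 (3 * 2) = {1, 2, 3, 4, 5, 6} := by decide
  rw [hIcc]
  repeat rw [Finset.sum_insert (by decide)]
  rw [Finset.sum_singleton]
  simp only [coeff_q_pow, Finset.sum_range_succ, Finset.sum_range_zero, mult0, mult1, mult2]
  norm_num [Nat.choose]

noncomputable def gc : ℕ → ℚ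
  | 0 => 0
  | (l + 1) => -Fc (l + 1) (PowerSeries.mk fun j => if h : j < l + 1 then gc j else 0)
  termination_by l => l
  decreasing_by exact h

/-- truncation of the candidate series below `l` -/
noncomputable def Tr (l : ℕ) : PowerSeries ℚ :=
  PowerSeries.mk fun j => if _h : j < l then gc j else 0

lemma gc_succ (l : ℕ) : gc (l + 1) = -Fc (l + 1) (Tr (l + 1)) := by
  rw [gc]
  rfl

noncomputable def Gser : PowerSeries ℚ := PowerSeries.mk gc

lemma Gser_normalized : IsNormalized Gser := by
  rw [isNormalized_iff]
  constructor
  · rw [Gser, PowerSeries.constantCoeff_mk]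
    rw [gc]
  · intro l hl
    obtain ⟨m, rfl⟩ : ∃ m, l = m + 1 := ⟨l - 1, by omega⟩
    have hTr0 : PowerSeries.constantCoeff (Tr (m + 1)) = 0 := by
      rw [Tr, PowerSeries.constantCoeff_mk, dif_pos (by omega : 0 < m + 1)]
      rw [gc]
    have hagree : ∀ j, j < m + 1 →
        PowerSeries.coeff j Gser = PowerSeries.coeff j (Tr (m + 1)) := by
      intro j hj
      rw [Gser, Tr, PowerSeries.coeff_mk, PowerSeries.coeff_mk, dif_pos hj]
    have hk := keyDiff (m + 1) (by omega) Gser (Tr (m + 1)) hTr0 hagree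
    rw [Gser, PowerSeries.coeff_mk, gc_succ] at hk
    rw [Tr, PowerSeries.coeff_mk, dif_neg (lt_irrefl (m + 1))] at hk
    rw [← Gser] at hk
    rw [hk]
    ring

lemma normalized_vals (g : PowerSeries ℚ) (hg : IsNormalized g) :
    PowerSeries.coeff 1 g = -2 ∧ PowerSeries.coeff 2 g = 5 := by
  rw [isNormalized_iff] at hg
  obtain ⟨hg0, hgF⟩ := hg
  have h1 : PowerSeries.coeff 1 g = -2 := by
    have hagree : ∀ j, j < 1 → PowerSeries.coeff j g = PowerSeries.coeff j 0 := by
      intro j hj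
      interval_cases j
      simp [PowerSeries.coeff_zero_eq_constantCoeff, hg0]
    have hk := keyDiff 1 le_rfl g 0 (by simp) hagree
    rw [hgF 1 le_rfl, Fc_one_zero] at hk
    simp at hk
    linarith
  refine ⟨h1, ?_⟩
  have hagree : ∀ j, j < 2 →
      PowerSeries.coeff j g = PowerSeries.coeff j ((PowerSeries.monomial 1) (-2)) := by
    intro j hj
    interval_cases j
    · rw [PowerSeries.coeff_monomial, if_neg (by norm_num),
        PowerSeries.coeff_zero_eq_constantCoeff]
      exact hg0
    · rw [h1, PowerSeries.coeff_monomial, if_pos rfl]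
  have hmon0 : PowerSeries.constantCoeff ((PowerSeries.monomial 1) (-2) : PowerSeries ℚ) = 0 := by
    rw [← PowerSeries.coeff_zero_eq_constantCoeff, PowerSeries.coeff_monomial]
    norm_num
  have hk := keyDiff 2 (by norm_num) g ((PowerSeries.monomial 1) (-2)) hmon0 hagree
  rw [hgF 2 (by norm_num), Fc_two_val, PowerSeries.coeff_monomial, if_neg (by norm_num)] at hk
  linarith

theorem stmt12 :
    (∃! g : PowerSeries ℚ, IsNormalized g) ∧
    ∀ g : PowerSeries ℚ, IsNormalized g →
      PowerSeries.coeff 1 g = -2 ∧ PowerSeries.coeff 2 g = 5 := by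
  refine ⟨⟨Gser, Gser_normalized, ?_⟩, normalized_vals⟩
  intro y hy
  apply PowerSeries.ext
  intro n
  induction n using Nat.strong_induction_on with
  | _ n ih =>
    cases n with
    | zero =>
      rw [PowerSeries.coeff_zero_eq_constantCoeff]
      rw [((isNormalized_iff y).mp hy).1, ((isNormalized_iff Gser).mp Gser_normalized).1]
    | succ m =>
      have hk := keyDiff (m + 1) (by omega) y Gser
        ((isNormalized_iff Gser).mp Gser_normalized).1 (fun j hj => ih j hj)
      rw [((isNormalized_iff y).mp hy).2 (m + 1) (by omega),
        ((isNormalized_iff Gser).mp Gser_normalized).2 (m + 1) (by omega)] at hk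
      linarith
end
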